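/- For nonnegative integers i, j, k, binom(k,i)*binom(k+i,i)*binom(k,j)*binom(k+j,j) = sum_{s=j}^{i+j} binom(i+j,i)*binom(j,s-i)*binom(s,j)*binom(k,s)*binom(k+s,s). -/

import Mathlib

open Finset

-- basic cast lemmas over ℚ
lemma h_top (n r : ℕ) : ((n+1).choose r : ℚ) * ((n:ℚ)+1-r) = ((n:ℚ)+1) * (n.choose r : ℚ) := by
  rcases le_or_gt r (n+1) with h | h
  · have := Nat.choose_mul_succ_eq n r
    have hc : ((n.choose r * (n+1) : ℕ) : ℚ) = (((n+1).choose r * (n + 1 - r) : ℕ) : ℚ) := by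
      exact_mod_cast congrArg (Nat.cast (R := ℚ)) this
    push_cast [Nat.cast_sub h] at hc
    linarith [hc]
  · rw [Nat.choose_eq_zero_of_lt h, Nat.choose_eq_zero_of_lt (by omega)]
    simp

lemma h_right (n r : ℕ) : (n.choose (r+1) : ℚ) * ((r:ℚ)+1) = (n.choose r : ℚ) * ((n:ℚ) - r) := by
  rcases le_or_gt r n with h | h
  · have := Nat.choose_succ_right_eq n r
    have hc : ((n.choose (r+1) * (r+1) : ℕ) : ℚ) = ((n.choose r * (n - r) : ℕ) : ℚ) := by
      exact_mod_cast congrArg (Nat.cast (R := ℚ)) this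
    push_cast [Nat.cast_sub h] at hc
    linarith [hc]
  · rw [Nat.choose_eq_zero_of_lt h, Nat.choose_eq_zero_of_lt (by omega)]
    simp

lemma h_ss (n r : ℕ) : ((n+1).choose (r+1) : ℚ) * ((r:ℚ)+1) = ((n:ℚ)+1) * (n.choose r : ℚ) := by
  have := Nat.add_one_mul_choose_eq n r
  have hc : (((n+1) * n.choose r : ℕ) : ℚ) = (((n+1).choose (r+1) * (r+1) : ℕ) : ℚ) := by
    exact_mod_cast congrArg (Nat.cast (R := ℚ)) this
  push_cast at hc
  linarith [hc]

noncomputable def Fq (i j k s : ℕ) : ℚ :=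
  if i ≤ s then ((i+j).choose i : ℚ) * (j.choose (s-i)) * (s.choose j) * (k.choose s) * ((k+s).choose s) else 0

noncomputable def Gq (i j k s : ℕ) : ℚ :=
  if i ≤ s then (-2) * ((s:ℚ)-i) * ((s:ℚ)-j) * ((i+j).choose i : ℚ) * (j.choose (s-i)) * (s.choose j) * (k.choose (s-1)) * ((k+s).choose s) else 0

lemma cert (i j k s : ℕ) :
    ((k:ℚ)+1-i)*((k:ℚ)+1-j) * Fq i j (k+1) s - ((k:ℚ)+1+i)*((k:ℚ)+1+j) * Fq i j k s
      = Gq i j k (s+1) - Gq i j k s := by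
  by_cases his : i ≤ s
  · -- main: i ≤ s
    have his1 : i ≤ s + 1 := by omega
    rw [Fq, Fq, Gq, Gq, if_pos his, if_pos his, if_pos his, if_pos his1]
    by_cases hjt : s - i ≤ j
    · by_cases hjs : j ≤ s
      · by_cases hsk : s ≤ k
        · -- generic case
          by_cases hs0 : s = 0
          · -- s = 0 forces i = 0, j = 0
            have hi0 : i = 0 := by omega
            have hj0 : j = 0 := by omega
            subst hs0 hi0 hj0
            norm_num [Nat.choose]
          · -- 1 ≤ s
            have hs1 : 1 ≤ s := by omega
            have e1 : s - 1 + 1 = s := by omega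
            have e2 : s + 1 - i = (s - i) + 1 := by omega
            have csub : ((s - i : ℕ) : ℚ) = (s:ℚ) - i := by
              push_cast [Nat.cast_sub his]; ring
            -- shifted binomials as divisions
            have hA : (((k+1).choose s : ℚ)) = ((k:ℚ)+1) * (k.choose s) / ((k:ℚ)+1-s) := by
              have hne : ((k:ℚ)+1-s) ≠ 0 := by
                have : (s:ℚ) ≤ k := by exact_mod_cast hsk
                linarith
              field_simp
              linarith [h_top k s]
            have hB : (((k+1+s).choose s : ℚ)) = ((k:ℚ)+1+s) * ((k+s).choose s) / ((k:ℚ)+1) := by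
              have hne : ((k:ℚ)+1) ≠ 0 := by positivity
              have e4 : k+1+s = (k+s)+1 := by omega
              rw [e4]
              field_simp
              have := h_top (k+s) s
              push_cast at this ⊢
              linarith [this]
            have hD : ((k.choose (s-1) : ℚ)) = (s:ℚ) * (k.choose s) / ((k:ℚ)-s+1) := by
              have hne : ((k:ℚ)-s+1) ≠ 0 := by
                have : (s:ℚ) ≤ k := by exact_mod_cast hsk
                linarith
              have := h_right k (s-1)
              rw [e1] at this
              have csub1 : ((s - 1 : ℕ) : ℚ) = (s:ℚ) - 1 := by
                push_cast [Nat.cast_sub hs1]; ring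
              rw [csub1] at this
              field_simp
              linarith [this]
            have hE : (((k+(s+1)).choose (s+1) : ℚ)) = ((k:ℚ)+s+1) * ((k+s).choose s) / ((s:ℚ)+1) := by
              have hne : ((s:ℚ)+1) ≠ 0 := by positivity
              have := h_ss (k+s) s
              have e3 : k + (s+1) = (k+s)+1 := by omega
              rw [e3]
              field_simp
              push_cast at this ⊢
              linarith [this]
            have hd1' : ((j.choose (s+1-i) : ℚ)) = ((j:ℚ)-((s:ℚ)-i)) * (j.choose (s-i)) / (((s:ℚ)-i)+1) := by
              have hne : (((s:ℚ)-i)+1) ≠ 0 := by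
                have : (i:ℚ) ≤ s := by exact_mod_cast his
                linarith
              have := h_right j (s-i)
              rw [csub] at this
              rw [e2]
              field_simp
              linarith [this]
            have hd2' : (((s+1).choose j : ℚ)) = ((s:ℚ)+1) * (s.choose j) / ((s:ℚ)+1-j) := by
              have hne : ((s:ℚ)+1-j) ≠ 0 := by
                have : (j:ℚ) ≤ s := by exact_mod_cast hjs
                linarith
              field_simp
              linarith [h_top s j]
            rw [hA, hB, hD, hE, hd1', hd2']
            have hne1 : ((k:ℚ)+1-s) ≠ 0 := by
              have : (s:ℚ) ≤ k := by exact_mod_cast hsk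
              linarith
            have hne2 : ((k:ℚ)-s+1) ≠ 0 := by
              have : (s:ℚ) ≤ k := by exact_mod_cast hsk
              linarith
            have hne3 : (((s:ℚ)-i)+1) ≠ 0 := by
              have : (i:ℚ) ≤ s := by exact_mod_cast his
              linarith
            have hne4 : ((s:ℚ)+1-j) ≠ 0 := by
              have : (j:ℚ) ≤ s := by exact_mod_cast hjs
              linarith
            simp only [Nat.add_sub_cancel, Nat.cast_add, Nat.cast_one]
            field_simp
            ring
        · -- s > k
          rcases Nat.lt_or_ge (k+1) s with h2 | h2
          · -- s ≥ k+2 : C(k+1,s)=C(k,s)=C(k,s-1)=0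
            rw [Nat.choose_eq_zero_of_lt (show k+1 < s by omega),
                Nat.choose_eq_zero_of_lt (show k < s by omega),
                Nat.choose_eq_zero_of_lt (show k < s+1-1 by omega),
                Nat.choose_eq_zero_of_lt (show k < s-1 by omega)]
            ring
          · -- s = k+1
            have hs : s = k + 1 := by omega
            subst hs
            rw [Nat.choose_eq_zero_of_lt (show k < k+1 by omega),
                Nat.choose_eq_zero_of_lt (show k < k+1+1-1 by omega)]
            rw [Nat.choose_self (k+1), show k+1-1 = k from rfl, Nat.choose_self k]
            -- need C(2k+2, k+1) = 2 C(2k+1, k+1)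
            have hc : (((k+1)+(k+1)).choose (k+1) : ℚ) = 2 * ((k+(k+1)).choose (k+1) : ℚ) := by
              have h1 : ((k+1)+(k+1)) = (2*k+1) + 1 := by omega
              have h2 : k+(k+1) = 2*k+1 := by omega
              rw [h1, h2, Nat.choose_succ_succ (2*k+1) k]
              have h3 : (2*k+1).choose k = (2*k+1).choose (k+1) := by
                have h4 := Nat.choose_symm (show k+1 ≤ 2*k+1 by omega)
                rwa [show 2*k+1-(k+1) = k by omega] at h4
              rw [h3]; push_cast; ring
            rw [hc]
            push_cast
            ring
      · -- j > s
        rw [Nat.choose_eq_zero_of_lt (show s < j by omega)]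
        rcases Nat.lt_or_ge (s+1) j with h2 | h2
        · rw [Nat.choose_eq_zero_of_lt h2]; ring
        · have : j = s + 1 := by omega
          subst this
          push_cast
          ring
    · -- s - i > j
      rw [Nat.choose_eq_zero_of_lt (show j < s - i by omega),
          Nat.choose_eq_zero_of_lt (show j < s + 1 - i by omega)]
      ring
  · -- i > s
    rw [Fq, Fq, Gq, Gq, if_neg his, if_neg his, if_neg his]
    by_cases his1 : i ≤ s + 1
    · have : i = s + 1 := by omega
      rw [if_pos his1]
      push_cast [this]
      ring
    · rw [if_neg his1]; ring

noncomputable def Sq (i j k : ℕ) : ℚ := ∑ s ∈ range (i+j+1), Fq i j k s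
noncomputable def Lq (i j k : ℕ) : ℚ := (k.choose i : ℚ) * ((k+i).choose i) * (k.choose j) * ((k+j).choose j)

lemma Gq_zero (i j k : ℕ) : Gq i j k 0 = 0 := by
  rw [Gq]
  by_cases h : i ≤ 0
  · rw [if_pos h]
    have : i = 0 := by omega
    simp [this]
  · rw [if_neg h]

lemma Gq_top (i j k : ℕ) : Gq i j k (i+j+1) = 0 := by
  rw [Gq, if_pos (by omega)]
  rw [show i+j+1-i = j+1 by omega, Nat.choose_succ_self]
  ring

lemma Srec (i j k : ℕ) :
    ((k:ℚ)+1-i)*((k:ℚ)+1-j) * Sq i j (k+1) = ((k:ℚ)+1+i)*((k:ℚ)+1+j) * Sq i j k := by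
  have htel := Finset.sum_range_sub (fun s => Gq i j k s) (i+j+1)
  have hsum : ∑ s ∈ range (i+j+1),
      (((k:ℚ)+1-i)*((k:ℚ)+1-j) * Fq i j (k+1) s - ((k:ℚ)+1+i)*((k:ℚ)+1+j) * Fq i j k s)
      = Gq i j k (i+j+1) - Gq i j k 0 := by
    rw [← htel]
    exact Finset.sum_congr rfl (fun s _ => cert i j k s)
  rw [Gq_top, Gq_zero, sub_zero] at hsum
  rw [Finset.sum_sub_distrib, ← Finset.mul_sum, ← Finset.mul_sum] at hsum
  have : ((k:ℚ)+1-i)*((k:ℚ)+1-j) * Sq i j (k+1) - ((k:ℚ)+1+i)*((k:ℚ)+1+j) * Sq i j k = 0 := hsum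
  linarith

lemma Lrec (i j k : ℕ) :
    ((k:ℚ)+1-i)*((k:ℚ)+1-j) * Lq i j (k+1) = ((k:ℚ)+1+i)*((k:ℚ)+1+j) * Lq i j k := by
  have h1 := h_top k i
  have h2 := h_top (k+i) i
  have h3 := h_top k j
  have h4 := h_top (k+j) j
  have e2 : k+1+i = (k+i)+1 := by omega
  have e4 : k+1+j = (k+j)+1 := by omega
  have hc : ((k:ℚ)+1)^2 * (((k:ℚ)+1-i)*((k:ℚ)+1-j) * Lq i j (k+1))
      = ((k:ℚ)+1)^2 * (((k:ℚ)+1+i)*((k:ℚ)+1+j) * Lq i j k) := by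
    rw [Lq, Lq, e2, e4]
    push_cast at h1 h2 h3 h4 ⊢
    linear_combination
      (((k:ℚ)+1)*((((k+i)+1).choose i : ℚ))*((((k:ℚ)+1-j))*(((k+1).choose j : ℚ)))*(((k:ℚ)+1)*(((k+j)+1).choose j : ℚ))) * h1
      + (((k:ℚ)+1)*((k.choose i : ℚ))*((((k:ℚ)+1-j))*(((k+1).choose j : ℚ)))*(((k:ℚ)+1)*(((k+j)+1).choose j : ℚ))) * h2
      + (((k:ℚ)+1)*((k.choose i : ℚ))*(((k:ℚ)+1+i)*(((k+i).choose i : ℚ)))*(((k:ℚ)+1)*(((k+j)+1).choose j : ℚ))) * h3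
      + (((k:ℚ)+1)*((k.choose i : ℚ))*(((k:ℚ)+1+i)*(((k+i).choose i : ℚ)))*(((k:ℚ)+1)*((k.choose j : ℚ)))) * h4
  have hne : ((k:ℚ)+1)^2 ≠ 0 := by positivity
  exact mul_left_cancel₀ hne hc

lemma Lzero (i j k : ℕ) (h : k < i ∨ k < j) : Lq i j k = 0 := by
  rw [Lq]
  rcases h with h | h
  · rw [Nat.choose_eq_zero_of_lt h]; ring
  · rw [Nat.choose_eq_zero_of_lt h]; ring

lemma Fzero (i j k s : ℕ) (h : k < i ∨ k < j) : Fq i j k s = 0 := by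
  rw [Fq]
  by_cases his : i ≤ s
  · rw [if_pos his]
    rcases h with h | h
    · rw [Nat.choose_eq_zero_of_lt (show k < s by omega)]; ring
    · by_cases hjs : j ≤ s
      · rw [Nat.choose_eq_zero_of_lt (show k < s by omega)]; ring
      · rw [Nat.choose_eq_zero_of_lt (show s < j by omega)]; ring
  · rw [if_neg his]

lemma Szero (i j k : ℕ) (h : k < i ∨ k < j) : Sq i j k = 0 := by
  rw [Sq]
  exact Finset.sum_eq_zero (fun s _ => Fzero i j k s h)

lemma eq_at_i (i j : ℕ) (h : j ≤ i) : Lq i j i = Sq i j i := by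
  rw [Sq]
  rw [Finset.sum_eq_single_of_mem i (by simp)]
  · rw [Fq, if_pos (le_refl i), Nat.sub_self, Nat.choose_zero_right, Nat.choose_self, Lq]
    have hsymm : ((i+j).choose i : ℚ) = ((i+j).choose j : ℚ) := by
      have := Nat.choose_symm (show i ≤ i + j by omega)
      rw [show i+j-i = j by omega] at this
      exact_mod_cast this.symm
    rw [hsymm, Nat.choose_self]
    push_cast
    ring
  · intro s _ hsi
    rw [Fq]
    by_cases his : i ≤ s
    · rw [if_pos his, Nat.choose_eq_zero_of_lt (show i < s by omega)]; ring
    · rw [if_neg his]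

lemma eq_at_j (i j : ℕ) (h : i < j) : Lq i j j = Sq i j j := by
  rw [Sq]
  rw [Finset.sum_eq_single_of_mem j (by simp)]
  · rw [Fq, if_pos (show i ≤ j by omega), Nat.choose_self, Lq]
    have hsymm : (j.choose (j - i) : ℚ) = (j.choose i : ℚ) := by
      exact_mod_cast Nat.choose_symm (show i ≤ j by omega)
    rw [hsymm, show j + i = i + j by omega, Nat.choose_self]
    push_cast
    ring
  · intro s _ hsj
    rw [Fq]
    by_cases his : i ≤ s
    · rw [if_pos his]
      by_cases hjs : j ≤ s
      · rw [Nat.choose_eq_zero_of_lt (show j < s by omega)]; ring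
      · rw [Nat.choose_eq_zero_of_lt (show s < j by omega)]; ring
    · rw [if_neg his]

lemma main_eq (k i j : ℕ) : Lq i j k = Sq i j k := by
  induction k with
  | zero =>
    by_cases h : i = 0 ∧ j = 0
    · obtain ⟨hi, hj⟩ := h
      subst hi hj
      rw [Lq, Sq]
      simp [Fq]
    · have : 0 < i ∨ 0 < j := by omega
      rw [Lzero i j 0 this, Szero i j 0 this]
  | succ k ih =>
    by_cases h1 : k + 1 < i ∨ k + 1 < j
    · rw [Lzero i j (k+1) h1, Szero i j (k+1) h1]
    · push_neg at h1
      obtain ⟨hik, hjk⟩ := h1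
      by_cases h2 : i ≤ k ∧ j ≤ k
      · obtain ⟨hik', hjk'⟩ := h2
        have hne : (((k:ℚ)+1-i)*((k:ℚ)+1-j)) ≠ 0 := by
          have h3 : (i:ℚ) ≤ k := by exact_mod_cast hik'
          have h4 : (j:ℚ) ≤ k := by exact_mod_cast hjk'
          have : ((k:ℚ)+1-i) > 0 := by linarith
          have : ((k:ℚ)+1-j) > 0 := by linarith
          positivity
        have h5 : ((k:ℚ)+1-i)*((k:ℚ)+1-j) * Lq i j (k+1)
            = ((k:ℚ)+1-i)*((k:ℚ)+1-j) * Sq i j (k+1) := by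
          rw [Lrec, Srec, ih]
        exact mul_left_cancel₀ hne h5
      · push_neg at h2
        by_cases hi : i = k + 1
        · subst hi
          exact eq_at_i (k+1) j (by omega)
        · have hj : j = k + 1 := by omega
          subst hj
          exact eq_at_j i (k+1) (by omega)

theorem stmt_17 (i j k : ℕ) :
    Nat.choose k i * Nat.choose (k + i) i * Nat.choose k j * Nat.choose (k + j) j =
      ∑ s ∈ Finset.Icc j (i + j),
        (if i ≤ s then
          Nat.choose (i + j) i * Nat.choose j (s - i) * Nat.choose s j *
            Nat.choose k s * Nat.choose (k + s) s
        else 0) := by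
  have key := main_eq k i j
  rw [Lq, Sq] at key
  have hsub : Finset.Icc j (i + j) ⊆ Finset.range (i+j+1) := by
    intro s hs
    simp only [Finset.mem_Icc] at hs
    simp only [Finset.mem_range]
    omega
  have hext : ∑ s ∈ range (i+j+1), Fq i j k s
      = ∑ s ∈ Finset.Icc j (i + j), Fq i j k s := by
    refine (Finset.sum_subset hsub ?_).symm
    intro s hs hns
    simp only [Finset.mem_range] at hs
    simp only [Finset.mem_Icc] at hns
    have hsj : s < j := by omega
    rw [Fq]
    by_cases his : i ≤ s
    · rw [if_pos his, Nat.choose_eq_zero_of_lt hsj]; ring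
    · rw [if_neg his]
  rw [hext] at key
  have : ((Nat.choose k i * Nat.choose (k + i) i * Nat.choose k j * Nat.choose (k + j) j : ℕ) : ℚ)
      = ((∑ s ∈ Finset.Icc j (i + j),
          (if i ≤ s then
            Nat.choose (i + j) i * Nat.choose j (s - i) * Nat.choose s j *
              Nat.choose k s * Nat.choose (k + s) s
          else 0) : ℕ) : ℚ) := by
    push_cast
    rw [key]
    refine Finset.sum_congr rfl fun s _ => ?_
    simp only [Fq]
    try split_ifs with his
    all_goals first | rfl | (push_cast; ring)
  exact_mod_cast this
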